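/- Let V be a finite nonempty set and F : 𝒫(V) → ℝ with F(∅) = 0. Then F is submodular if and only if its Lovász extension F^L : ℝ^V → ℝ is a convex function. -/

import Mathlib

open scoped BigOperators

/-- The Lovász extension of a set function `F : 𝒫(V) → ℝ`:
`F^L(x) = ∫_{min_i x_i}^{max_i x_i} F({i : x_i > t}) dt + F(V) · min_i x_i`. -/
noncomputable def lovasz {V : Type*} [Fintype V] [Nonempty V] (F : Finset V → ℝ)
    (x : V → ℝ) : ℝ :=
  (∫ t in (Finset.univ.inf' Finset.univ_nonempty x)..(Finset.univ.sup' Finset.univ_nonempty x),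
      F (Finset.univ.filter fun i => x i > t)) +
    F Finset.univ * Finset.univ.inf' Finset.univ_nonempty x

open Finset MeasureTheory intervalIntegral Set

lemma ae_const_of_Ioo {f : ℝ → ℝ} {a b c : ℝ} (hab : a ≤ b)
    (h : ∀ t ∈ Set.Ioo a b, f t = c) :
    ∀ᵐ t ∂(volume : Measure ℝ), t ∈ Set.uIoc a b → f t = c := by
  have hb : ∀ᵐ t ∂(volume : Measure ℝ), t ≠ b :=
    ae_iff.mpr (by simp)
  filter_upwards [hb] with t ht hmem
  rw [Set.uIoc_of_le hab] at hmem
  exact h t ⟨hmem.1, lt_of_le_of_ne hmem.2 ht⟩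

lemma intervalIntegrable_of_Ioo {f : ℝ → ℝ} {a b c : ℝ} (hab : a ≤ b)
    (h : ∀ t ∈ Set.Ioo a b, f t = c) :
    IntervalIntegrable f volume a b := by
  rw [intervalIntegrable_iff]
  have h1 : IntegrableOn (fun _ : ℝ => c) (Set.uIoc a b) volume :=
    MeasureTheory.integrableOn_const (by rw [Set.uIoc_of_le hab]; exact measure_Ioc_lt_top.ne)
  have h2 : f =ᵐ[volume.restrict (Set.uIoc a b)] fun _ => c :=
    (ae_restrict_iff' measurableSet_uIoc).mpr (ae_const_of_Ioo hab h)
  exact h1.congr_fun_ae h2.symm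

lemma integral_of_Ioo {f : ℝ → ℝ} {a b c : ℝ} (hab : a ≤ b)
    (h : ∀ t ∈ Set.Ioo a b, f t = c) :
    ∫ t in a..b, f t = c * (b - a) := by
  rw [intervalIntegral.integral_congr_ae (g := fun _ => c) (ae_const_of_Ioo hab h),
    intervalIntegral.integral_const, smul_eq_mul, mul_comm]

section main
variable {V : Type*} [Fintype V] [Nonempty V] [DecidableEq V]

noncomputable def ind (S : Finset V) : V → ℝ := fun i => if i ∈ S then 1 else 0

lemma inf'_shift (x : V → ℝ) (c : ℝ) :
    Finset.univ.inf' Finset.univ_nonempty (fun i => x i + c)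
      = Finset.univ.inf' Finset.univ_nonempty x + c := by
  apply le_antisymm
  · obtain ⟨i, _, hi⟩ := Finset.exists_mem_eq_inf' (Finset.univ_nonempty) x
    calc Finset.univ.inf' Finset.univ_nonempty (fun i => x i + c) ≤ x i + c :=
          Finset.inf'_le _ (Finset.mem_univ i)
      _ = _ := by rw [hi]
  · refine Finset.le_inf' _ _ fun i _ => ?_
    have := Finset.inf'_le x (Finset.mem_univ i)
    linarith
lemma sup'_shift (x : V → ℝ) (c : ℝ) :
    Finset.univ.sup' Finset.univ_nonempty (fun i => x i + c)
      = Finset.univ.sup' Finset.univ_nonempty x + c := by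
  apply le_antisymm
  · refine Finset.sup'_le _ _ fun i _ => ?_
    have := Finset.le_sup' x (Finset.mem_univ i)
    linarith
  · obtain ⟨i, _, hi⟩ := Finset.exists_mem_eq_sup' (Finset.univ_nonempty) x
    calc Finset.univ.sup' Finset.univ_nonempty x + c = x i + c := by rw [hi]
      _ ≤ _ := Finset.le_sup' (fun j => x j + c) (Finset.mem_univ i)

lemma lovasz_shift (F : Finset V → ℝ) (x : V → ℝ) (c : ℝ) :
    lovasz F (fun i => x i + c) = lovasz F x + c * F Finset.univ := by
  unfold lovasz
  rw [inf'_shift, sup'_shift]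
  have : ∀ a b : ℝ, (∫ t in a+c..b+c, F (Finset.univ.filter fun i => x i + c > t))
      = ∫ t in a..b, F (Finset.univ.filter fun i => x i > t) := by
    intro a b
    rw [← intervalIntegral.integral_comp_add_right
      (f := fun t => F (Finset.univ.filter fun i => x i + c > t)) c]
    congr 1; funext t
    congr 1; apply Finset.filter_congr; intro i _
    constructor <;> intro <;> [skip; skip] <;> simp_all <;> linarith
  rw [this]; ring
end main

section main2
variable {V : Type*} [Fintype V] [Nonempty V] [DecidableEq V]

omit [DecidableEq V] in
lemma inf'_eq (x : V → ℝ) (i0 : V) (h1 : ∀ i, x i0 ≤ x i) :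
    Finset.univ.inf' Finset.univ_nonempty x = x i0 :=
  le_antisymm (Finset.inf'_le x (Finset.mem_univ i0))
    (Finset.le_inf' _ _ fun i _ => h1 i)

omit [DecidableEq V] in
lemma sup'_eq (x : V → ℝ) (i0 : V) (h1 : ∀ i, x i ≤ x i0) :
    Finset.univ.sup' Finset.univ_nonempty x = x i0 :=
  le_antisymm (Finset.sup'_le _ _ fun i _ => h1 i)
    (Finset.le_sup' x (Finset.mem_univ i0))

lemma lovasz_ind (F : Finset V → ℝ) (hF : F ∅ = 0) (T : Finset V) :
    lovasz F (ind T) = F T := by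
  rcases eq_or_ne T Finset.univ with rfl | hTu
  · have h : ∀ i : V, ind (Finset.univ : Finset V) i = 1 := fun i => if_pos (Finset.mem_univ i)
    have hc : Finset.univ.inf' Finset.univ_nonempty (ind (Finset.univ : Finset V)) = 1 := by
      rw [inf'_eq _ (Classical.arbitrary V) (fun i => by rw [h, h]), h]
    have hc' : Finset.univ.sup' Finset.univ_nonempty (ind (Finset.univ : Finset V)) = 1 := by
      rw [sup'_eq _ (Classical.arbitrary V) (fun i => by rw [h, h]), h]
    unfold lovasz
    rw [hc, hc', intervalIntegral.integral_same, mul_one, zero_add]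
  · obtain ⟨i0, hi0⟩ : ∃ i0, i0 ∉ T := by
      by_contra hc; push_neg at hc
      exact hTu (Finset.eq_univ_iff_forall.mpr hc)
    have hnn : ∀ i, ind T i0 ≤ ind T i := by
      intro i; unfold ind; simp [hi0]; positivity
    have hinf : Finset.univ.inf' Finset.univ_nonempty (ind T) = 0 := by
      rw [inf'_eq _ i0 hnn]; unfold ind; simp [hi0]
    rcases T.eq_empty_or_nonempty with rfl | ⟨j0, hj0⟩
    · have h0 : ∀ i : V, ind (∅ : Finset V) i = 0 := fun i => by unfold ind; simp
      have hsup : Finset.univ.sup' Finset.univ_nonempty (ind (∅ : Finset V)) = 0 := by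
        rw [sup'_eq _ i0 (fun i => by rw [h0, h0]), h0]
      unfold lovasz
      rw [hinf, hsup, intervalIntegral.integral_same, mul_zero, zero_add, hF]
    · have hsup : Finset.univ.sup' Finset.univ_nonempty (ind T) = 1 := by
        rw [sup'_eq _ j0 (fun i => by unfold ind; simp [hj0]; split <;> simp)]
        unfold ind; simp [hj0]
      have hmid : ∀ t ∈ Set.Ioo (0:ℝ) 1,
          F (Finset.univ.filter fun i => ind T i > t) = F T := by
        intro t ht
        congr 1
        ext i
        simp only [Finset.mem_filter, Finset.mem_univ, true_and]
        unfold ind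
        split <;> rename_i hmem <;> simp [hmem]
        · exact ht.2
        · linarith [ht.1]
      unfold lovasz
      rw [hinf, hsup, mul_zero, add_zero,
        integral_of_Ioo zero_le_one hmid]
      ring
end main2

section main3
variable {V : Type*} [Fintype V] [Nonempty V] [DecidableEq V]

lemma lovasz_chain2 (F : Finset V → ℝ) (hF : F ∅ = 0) (S T : Finset V) (hTS : T ⊆ S) :
    lovasz F (fun i => ind S i + ind T i) = F S + F T := by
  rcases eq_or_ne S Finset.univ with rfl | hSu
  · have hx : (fun i => ind (Finset.univ : Finset V) i + ind T i)
        = fun i => ind T i + 1 := by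
      funext i; unfold ind; simp [Finset.mem_univ]; ring
    rw [hx, lovasz_shift, lovasz_ind F hF]
    ring
  · obtain ⟨i0, hi0⟩ : ∃ i0, i0 ∉ S := by
      by_contra hc; push_neg at hc
      exact hSu (Finset.eq_univ_iff_forall.mpr hc)
    have hi0T : i0 ∉ T := fun h => hi0 (hTS h)
    set x : V → ℝ := fun i => ind S i + ind T i with hxdef
    have hval : ∀ i, (i ∈ T ∧ x i = 2) ∨ (i ∈ S ∧ i ∉ T ∧ x i = 1) ∨ (i ∉ S ∧ i ∉ T ∧ x i = 0) := by
      intro i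
      by_cases hT : i ∈ T
      · exact Or.inl ⟨hT, by simp [hxdef, ind, hT, hTS hT]; norm_num⟩
      · by_cases hS : i ∈ S
        · exact Or.inr (Or.inl ⟨hS, hT, by simp [hxdef, ind, hT, hS]⟩)
        · exact Or.inr (Or.inr ⟨hS, hT, by simp [hxdef, ind, hT, hS]⟩)
    have hx0 : x i0 = 0 := by simp [hxdef, ind, hi0, hi0T]
    have hnn : ∀ i, 0 ≤ x i := by
      intro i; rcases hval i with ⟨_, h⟩ | ⟨_, _, h⟩ | ⟨_, _, h⟩ <;> rw [h] <;> norm_num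
    have hle2 : ∀ i, x i ≤ 2 := by
      intro i; rcases hval i with ⟨_, h⟩ | ⟨_, _, h⟩ | ⟨_, _, h⟩ <;> rw [h] <;> norm_num
    have hinf : Finset.univ.inf' Finset.univ_nonempty x = 0 := by
      rw [inf'_eq x i0 (fun i => by rw [hx0]; exact hnn i), hx0]
    have hS1 : ∀ t ∈ Set.Ioo (0:ℝ) 1, F (Finset.univ.filter fun i => x i > t) = F S := by
      intro t ht; congr 1; ext i
      simp only [Finset.mem_filter, Finset.mem_univ, true_and]
      rcases hval i with ⟨h1, h⟩ | ⟨h1, _, h⟩ | ⟨h1, _, h⟩ <;> rw [h]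
      · constructor
        · intro _; exact hTS h1
        · intro _; linarith [ht.2]
      · constructor
        · intro _; exact h1
        · intro _; exact ht.2
      · constructor
        · intro hc; linarith [ht.1]
        · intro hc; exact absurd hc h1
    have hT1 : ∀ t ∈ Set.Ioo (1:ℝ) 2, F (Finset.univ.filter fun i => x i > t) = F T := by
      intro t ht; congr 1; ext i
      simp only [Finset.mem_filter, Finset.mem_univ, true_and]
      rcases hval i with ⟨h1, h⟩ | ⟨h1, h2, h⟩ | ⟨h1, h2, h⟩ <;> rw [h]
      · simp [h1, ht.2]
      · constructor
        · intro hc; linarith [ht.1]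
        · intro hc; exact absurd hc h2
      · constructor
        · intro hc; linarith [ht.1]
        · intro hc; exact absurd hc h2
    rcases T.eq_empty_or_nonempty with rfl | ⟨j0, hj0⟩
    · have hx' : x = ind S := by
        funext i; simp [hxdef, ind]
      rw [hx', lovasz_ind F hF, hF, add_zero]
    · have hsup : Finset.univ.sup' Finset.univ_nonempty x = 2 := by
        have hx2 : x j0 = 2 := by simp [hxdef, ind, hj0, hTS hj0]; norm_num
        rw [sup'_eq x j0 (fun i => by rw [hx2]; exact hle2 i), hx2]
      unfold lovasz
      rw [hinf, hsup, mul_zero, add_zero]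
      have hsplit : (∫ t in (0:ℝ)..2, F (Finset.univ.filter fun i => x i > t))
          = (∫ t in (0:ℝ)..1, F (Finset.univ.filter fun i => x i > t))
            + ∫ t in (1:ℝ)..2, F (Finset.univ.filter fun i => x i > t) := by
        rw [intervalIntegral.integral_add_adjacent_intervals
          (intervalIntegrable_of_Ioo zero_le_one hS1)
          (intervalIntegrable_of_Ioo one_le_two hT1)]
      rw [hsplit, integral_of_Ioo zero_le_one hS1, integral_of_Ioo one_le_two hT1]
      ring
end main3

section main4
variable {V : Type*} [Fintype V] [Nonempty V] [DecidableEq V]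

lemma submod_of_convex (F : Finset V → ℝ) (hF : F ∅ = 0)
    (hc : ConvexOn ℝ Set.univ (lovasz F)) :
    ∀ A B : Finset V, F (A ∪ B) + F (A ∩ B) ≤ F A + F B := by
  intro A B
  set u : V → ℝ := fun i => ind A i + ind A i with hu
  set v : V → ℝ := fun i => ind B i + ind B i with hv
  have h1 : lovasz F u = F A + F A := lovasz_chain2 F hF A A subset_rfl
  have h2 : lovasz F v = F B + F B := lovasz_chain2 F hF B B subset_rfl
  have hmid : (1/2 : ℝ) • u + (1/2 : ℝ) • v
      = fun i => ind (A ∪ B) i + ind (A ∩ B) i := by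
    funext i
    simp only [Pi.add_apply, Pi.smul_apply, smul_eq_mul, hu, hv, ind]
    by_cases hA : i ∈ A <;> by_cases hB : i ∈ B <;>
      simp [hA, hB, Finset.mem_union, Finset.mem_inter] <;> ring
  have h3 := hc.2 (Set.mem_univ u) (Set.mem_univ v)
    (by norm_num : (0:ℝ) ≤ 1/2) (by norm_num : (0:ℝ) ≤ 1/2) (by norm_num)
  rw [hmid, lovasz_chain2 F hF (A ∪ B) (A ∩ B) (Finset.inter_subset_union), h1, h2] at h3
  simp only [smul_eq_mul] at h3
  linarith
end main4

section greedy
variable {V : Type*} [Fintype V] [Nonempty V] [DecidableEq V] {n : ℕ}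

def chainSet (σ : Fin n ≃ V) (k : ℕ) : Finset V :=
  Finset.univ.filter fun i => (σ.symm i : ℕ) < k

noncomputable def svals (σ : Fin n ≃ V) (x : V → ℝ) : ℕ → ℝ :=
  fun k => if h : k < n then x (σ ⟨k, h⟩) else 0

noncomputable def gw (σ : Fin n ≃ V) (F : Finset V → ℝ) : V → ℝ :=
  fun i => F (chainSet σ ((σ.symm i : ℕ) + 1)) - F (chainSet σ (σ.symm i : ℕ))

lemma svals_lt (σ : Fin n ≃ V) (x : V → ℝ) {k : ℕ} (h : k < n) :
    svals σ x k = x (σ ⟨k, h⟩) := dif_pos h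

lemma chainSet_zero (σ : Fin n ≃ V) : chainSet σ 0 = ∅ := by
  simp [chainSet]

lemma chainSet_top (σ : Fin n ≃ V) : chainSet σ n = Finset.univ := by
  simp only [chainSet]
  exact Finset.filter_true_of_mem fun i _ => (σ.symm i).isLt

lemma self_not_mem_chainSet (σ : Fin n ≃ V) {k : ℕ} (h : k < n) :
    σ ⟨k, h⟩ ∉ chainSet σ k := by
  simp [chainSet]

lemma chainSet_succ (σ : Fin n ≃ V) {k : ℕ} (h : k < n) :
    chainSet σ (k + 1) = insert (σ ⟨k, h⟩) (chainSet σ k) := by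
  ext i
  simp only [chainSet, Finset.mem_filter, Finset.mem_univ, true_and, Finset.mem_insert]
  constructor
  · intro hi
    rcases eq_or_lt_of_le (Nat.lt_succ_iff.mp hi) with he | hlt
    · left
      have : σ.symm i = ⟨k, h⟩ := Fin.ext he
      rw [← this, Equiv.apply_symm_apply]
    · right; exact hlt
  · rintro (rfl | hi)
    · simp
    · omega

lemma abel_sum (A b : ℕ → ℝ) (n : ℕ) :
    ∑ k ∈ Finset.range (n + 1), (A (k + 1) - A k) * b k
      = (∑ k ∈ Finset.range n, (b k - b (k + 1)) * A (k + 1))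
        + b n * A (n + 1) - b 0 * A 0 := by
  induction n with
  | zero => simp; ring
  | succ m ih => rw [Finset.sum_range_succ, ih, Finset.sum_range_succ]; ring

lemma sum_gw_univ (σ : Fin n ≃ V) (F : Finset V → ℝ) (hF : F ∅ = 0) :
    ∑ i, gw σ F i = F Finset.univ := by
  rw [← Equiv.sum_comp σ (fun i => gw σ F i)]
  have : ∀ k : Fin n, gw σ F (σ k)
      = F (chainSet σ ((k : ℕ) + 1)) - F (chainSet σ (k : ℕ)) := by
    intro k; simp [gw, Equiv.symm_apply_apply]
  rw [Finset.sum_congr rfl fun k _ => this k]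
  rw [Fin.sum_univ_eq_sum_range (fun k => F (chainSet σ (k + 1)) - F (chainSet σ k)) n]
  rw [Finset.sum_range_sub (fun k => F (chainSet σ k)) n]
  rw [chainSet_zero, chainSet_top, hF, sub_zero]

lemma sum_gw_le (σ : Fin n ≃ V) (F : Finset V → ℝ) (hF : F ∅ = 0)
    (hsub : ∀ A B : Finset V, F (A ∪ B) + F (A ∩ B) ≤ F A + F B) (A : Finset V) :
    ∑ i ∈ A, gw σ F i ≤ F A := by
  have key : ∀ k, k ≤ n → ∑ i ∈ A ∩ chainSet σ k, gw σ F i ≤ F (A ∩ chainSet σ k) := by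
    intro k
    induction k with
    | zero => intro _; rw [chainSet_zero]; simp [hF]
    | succ m ih =>
      intro hm
      have hmn : m < n := hm
      have hrec := ih (le_of_lt hmn)
      rw [chainSet_succ σ hmn]
      by_cases hA : σ ⟨m, hmn⟩ ∈ A
      · have hsplit : A ∩ insert (σ ⟨m, hmn⟩) (chainSet σ m)
            = insert (σ ⟨m, hmn⟩) (A ∩ chainSet σ m) := by
          ext i
          simp only [Finset.mem_inter, Finset.mem_insert]
          constructor
          · rintro ⟨hiA, rfl | hic⟩
            · exact Or.inl rfl
            · exact Or.inr ⟨hiA, hic⟩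
          · rintro (rfl | ⟨hiA, hic⟩)
            · exact ⟨hA, Or.inl rfl⟩
            · exact ⟨hiA, Or.inr hic⟩
        rw [hsplit]
        have hnotmem : σ ⟨m, hmn⟩ ∉ A ∩ chainSet σ m :=
          fun h => self_not_mem_chainSet σ hmn (Finset.mem_inter.mp h).2
        rw [Finset.sum_insert hnotmem]
        have hgw : gw σ F (σ ⟨m, hmn⟩)
            = F (chainSet σ (m + 1)) - F (chainSet σ m) := by
          simp [gw, Equiv.symm_apply_apply]
        rw [hgw]
        -- submodularity applied to X = insert (σ m) (A ∩ chainSet σ m), Y = chainSet σ m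
        have hun : insert (σ ⟨m, hmn⟩) (A ∩ chainSet σ m) ∪ chainSet σ m
            = chainSet σ (m + 1) := by
          rw [chainSet_succ σ hmn]
          ext i
          simp only [Finset.mem_union, Finset.mem_insert, Finset.mem_inter]
          tauto
        have hin : insert (σ ⟨m, hmn⟩) (A ∩ chainSet σ m) ∩ chainSet σ m
            = A ∩ chainSet σ m := by
          ext i
          simp only [Finset.mem_inter, Finset.mem_insert]
          constructor
          · rintro ⟨rfl | ⟨hiA, _⟩, hic⟩
            · exact absurd hic (self_not_mem_chainSet σ hmn)
            · exact ⟨hiA, hic⟩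
          · rintro ⟨hiA, hic⟩
            exact ⟨Or.inr ⟨hiA, hic⟩, hic⟩
        have := hsub (insert (σ ⟨m, hmn⟩) (A ∩ chainSet σ m)) (chainSet σ m)
        rw [hun, hin] at this
        rw [chainSet_succ σ hmn] at this ⊢
        linarith
      · have heq : A ∩ insert (σ ⟨m, hmn⟩) (chainSet σ m) = A ∩ chainSet σ m := by
          ext i
          simp only [Finset.mem_inter, Finset.mem_insert]
          constructor
          · rintro ⟨hiA, rfl | hic⟩
            · exact absurd hiA hA
            · exact ⟨hiA, hic⟩
          · rintro ⟨hiA, hic⟩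
            exact ⟨hiA, Or.inr hic⟩
        rw [heq]
        exact hrec
  have := key n le_rfl
  rwa [chainSet_top, Finset.inter_univ] at this
end greedy

section greedy2
variable {V : Type*} [Fintype V] [Nonempty V] [DecidableEq V] {n : ℕ}

lemma lovasz_sorted (σ : Fin n ≃ V) (F : Finset V → ℝ) (x : V → ℝ)
    (hs : ∀ j k : Fin n, j ≤ k → x (σ k) ≤ x (σ j)) :
    lovasz F x = (∑ k ∈ Finset.range (n - 1),
        (svals σ x k - svals σ x (k + 1)) * F (chainSet σ (k + 1)))
      + svals σ x (n - 1) * F Finset.univ := by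
  have hn : 0 < n := (σ.symm (Classical.arbitrary V)).pos
  set f : ℝ → ℝ := fun t => F (Finset.univ.filter fun i => x i > t) with hfdef
  set a : ℕ → ℝ := fun k => svals σ x (n - 1 - k) with hadef
  -- inf and sup
  have hxle : ∀ (j k : Fin n), j ≤ k → x (σ k) ≤ x (σ j) := hs
  have hinf : Finset.univ.inf' Finset.univ_nonempty x = svals σ x (n - 1) := by
    rw [svals_lt σ x (by omega : n - 1 < n)]
    apply inf'_eq
    intro i
    have h1 : σ.symm i ≤ (⟨n - 1, by omega⟩ : Fin n) := by
      rw [Fin.le_def]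
      simp only []
      omega
    have := hxle (σ.symm i) ⟨n - 1, by omega⟩ h1
    rwa [Equiv.apply_symm_apply] at this
  have hsup : Finset.univ.sup' Finset.univ_nonempty x = svals σ x 0 := by
    rw [svals_lt σ x hn]
    apply sup'_eq
    intro i
    have h1 : (⟨0, hn⟩ : Fin n) ≤ σ.symm i := by
      rw [Fin.le_def]; simp
    have := hxle ⟨0, hn⟩ (σ.symm i) h1
    rwa [Equiv.apply_symm_apply] at this
  -- pieces
  have hpiece : ∀ k, k < n - 1 →
      (∀ t ∈ Set.Ioo (a k) (a (k + 1)), f t = F (chainSet σ (n - 1 - k)))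
        ∧ a k ≤ a (k + 1) := by
    intro k hk
    have hj1 : n - 1 - k = (n - 2 - k) + 1 := by omega
    have hj2 : n - 1 - (k + 1) = n - 2 - k := by omega
    have hjn : n - 2 - k < n := by omega
    have hjn1 : (n - 2 - k) + 1 < n := by omega
    have hak : a k = x (σ ⟨(n - 2 - k) + 1, hjn1⟩) := by
      rw [hadef]; simp only []
      rw [hj1, svals_lt σ x hjn1]
    have hak1 : a (k + 1) = x (σ ⟨n - 2 - k, hjn⟩) := by
      rw [hadef]; simp only []
      rw [hj2, svals_lt σ x hjn]
    constructor
    · intro t ht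
      rw [hfdef]
      simp only []
      congr 1
      ext i
      simp only [Finset.mem_filter, Finset.mem_univ, true_and, chainSet, hj1]
      constructor
      · intro hgt
        by_contra hge
        push_neg at hge
        have h1 : (⟨(n - 2 - k) + 1, hjn1⟩ : Fin n) ≤ σ.symm i := by
          rw [Fin.le_def]; simpa using hge
        have := hxle ⟨(n - 2 - k) + 1, hjn1⟩ (σ.symm i) h1
        rw [Equiv.apply_symm_apply] at this
        rw [← hak] at this
        have := ht.1
        linarith
      · intro hlt
        have h1 : σ.symm i ≤ (⟨n - 2 - k, hjn⟩ : Fin n) := by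
          rw [Fin.le_def]; simpa using Nat.lt_succ_iff.mp hlt
        have := hxle (σ.symm i) ⟨n - 2 - k, hjn⟩ h1
        rw [Equiv.apply_symm_apply] at this
        rw [← hak1] at this
        have := ht.2
        linarith
    · rw [hak, hak1]
      apply hxle
      rw [Fin.le_def]
      simp
  have hint : ∀ k < n - 1, IntervalIntegrable f volume (a k) (a (k + 1)) := by
    intro k hk
    exact intervalIntegrable_of_Ioo (hpiece k hk).2 (hpiece k hk).1
  have hsplit := intervalIntegral.sum_integral_adjacent_intervals (μ := volume)
    (a := a) (n := n - 1) hint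
  have ha0 : a 0 = svals σ x (n - 1) := by simp [hadef]
  have han : a (n - 1) = svals σ x 0 := by simp [hadef]
  have hivals : ∀ k ∈ Finset.range (n - 1),
      (∫ t in a k..a (k + 1), f t)
        = F (chainSet σ (n - 1 - k)) * (a (k + 1) - a k) := by
    intro k hk
    rw [Finset.mem_range] at hk
    exact integral_of_Ioo (hpiece k hk).2 (hpiece k hk).1
  -- main integral
  have hmain : (∫ t in (Finset.univ.inf' Finset.univ_nonempty x)..(Finset.univ.sup'
      Finset.univ_nonempty x), f t)
      = ∑ k ∈ Finset.range (n - 1), F (chainSet σ (n - 1 - k)) * (a (k + 1) - a k) := by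
    rw [hinf, hsup, ← ha0, ← han, ← hsplit]
    exact Finset.sum_congr rfl hivals
  -- reflect the sum
  have hrefl : ∑ k ∈ Finset.range (n - 1), F (chainSet σ (n - 1 - k)) * (a (k + 1) - a k)
      = ∑ k ∈ Finset.range (n - 1),
          (svals σ x k - svals σ x (k + 1)) * F (chainSet σ (k + 1)) := by
    rw [← Finset.sum_range_reflect
      (fun k => (svals σ x k - svals σ x (k + 1)) * F (chainSet σ (k + 1))) (n - 1)]
    apply Finset.sum_congr rfl
    intro k hk
    rw [Finset.mem_range] at hk
    rw [hadef]
    simp only []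
    rw [show n - 1 - 1 - k + 1 = n - 1 - k from by omega,
      show n - 1 - 1 - k = n - 1 - (k + 1) from by omega]
    ring
  unfold lovasz
  rw [← hfdef, hmain, hrefl, hinf]
  ring
end greedy2

section greedy3
variable {V : Type*} [Fintype V] [Nonempty V] [DecidableEq V] {n : ℕ}

lemma sum_fin_to_range (σ : Fin n ≃ V) (g : V → ℝ) (x : V → ℝ) (B : ℕ → ℝ)
    (hB : ∀ (k : ℕ) (h : k < n), g (σ ⟨k, h⟩) = B k) :
    ∑ i, g i * x i = ∑ k ∈ Finset.range n, B k * svals σ x k := by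
  rw [← Equiv.sum_comp σ (fun i => g i * x i),
    ← Fin.sum_univ_eq_sum_range (fun k => B k * svals σ x k) n]
  apply Finset.sum_congr rfl
  intro k _
  rw [hB k k.isLt, svals_lt σ x k.isLt]

lemma lovasz_sorted' (σ : Fin n ≃ V) (F : Finset V → ℝ) (hF : F ∅ = 0) (x : V → ℝ)
    (hs : ∀ j k : Fin n, j ≤ k → x (σ k) ≤ x (σ j)) :
    lovasz F x = ∑ i, gw σ F i * x i := by
  have hn : 0 < n := (σ.symm (Classical.arbitrary V)).pos
  rw [sum_fin_to_range σ (gw σ F) x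
    (fun k => F (chainSet σ (k + 1)) - F (chainSet σ k))
    (fun k h => by simp [gw, Equiv.symm_apply_apply])]
  have habel := abel_sum (fun k => F (chainSet σ k)) (svals σ x) (n - 1)
  rw [Nat.sub_add_cancel hn] at habel
  rw [habel, chainSet_zero, chainSet_top, hF, lovasz_sorted σ F x hs]
  ring

lemma gval_le_lovasz (τ σ : Fin n ≃ V) (F : Finset V → ℝ) (hF : F ∅ = 0)
    (hsub : ∀ A B : Finset V, F (A ∪ B) + F (A ∩ B) ≤ F A + F B)
    (x : V → ℝ) (hs : ∀ j k : Fin n, j ≤ k → x (σ k) ≤ x (σ j)) :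
    ∑ i, gw τ F i * x i ≤ lovasz F x := by
  have hn : 0 < n := (σ.symm (Classical.arbitrary V)).pos
  set B : ℕ → ℝ := fun k => ∑ i ∈ chainSet σ k, gw τ F i with hBdef
  have hBdiff : ∀ (k : ℕ) (h : k < n), gw τ F (σ ⟨k, h⟩) = B (k + 1) - B k := by
    intro k h
    rw [hBdef]
    simp only []
    rw [chainSet_succ σ h, Finset.sum_insert (self_not_mem_chainSet σ h)]
    ring
  rw [sum_fin_to_range σ (gw τ F) x (fun k => B (k + 1) - B k) hBdiff]
  have habel := abel_sum B (svals σ x) (n - 1)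
  rw [Nat.sub_add_cancel hn] at habel
  rw [habel]
  have hB0 : B 0 = 0 := by rw [hBdef]; simp [chainSet_zero]
  have hBn : B n = F Finset.univ := by
    rw [hBdef]; simp only []; rw [chainSet_top]; exact sum_gw_univ τ F hF
  rw [hB0, hBn, mul_zero, sub_zero, lovasz_sorted σ F x hs]
  apply add_le_add_left
  apply Finset.sum_le_sum
  intro k hk
  rw [Finset.mem_range] at hk
  have hnonneg : 0 ≤ svals σ x k - svals σ x (k + 1) := by
    rw [svals_lt σ x (by omega : k < n), svals_lt σ x (by omega : k + 1 < n)]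
    have := hs ⟨k, by omega⟩ ⟨k + 1, by omega⟩ (by rw [Fin.le_def]; simp)
    linarith
  exact mul_le_mul_of_nonneg_left (sum_gw_le τ F hF hsub _) hnonneg
end greedy3

section final
variable {V : Type*} [Fintype V] [Nonempty V] [DecidableEq V]

lemma exists_sorted (x : V → ℝ) :
    ∃ σ : Fin (Fintype.card V) ≃ V,
      ∀ j k : Fin (Fintype.card V), j ≤ k → x (σ k) ≤ x (σ j) := by
  set e := (Fintype.equivFin V).symm
  set f : Fin (Fintype.card V) → ℝ := fun j => -x (e j) with hfdef
  refine ⟨(Tuple.sort f).trans e, ?_⟩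
  intro j k hjk
  have := Tuple.monotone_sort f hjk
  simp only [Function.comp_apply, hfdef] at this
  simp only [Equiv.trans_apply]
  linarith

lemma convexOn_linear (c : V → ℝ) :
    ConvexOn ℝ Set.univ (fun x : V → ℝ => ∑ i, c i * x i) := by
  refine ⟨convex_univ, fun x _ y _ a b _ _ _ => le_of_eq ?_⟩
  simp only [Pi.add_apply, Pi.smul_apply, smul_eq_mul]
  rw [Finset.mul_sum, Finset.mul_sum, ← Finset.sum_add_distrib]
  exact Finset.sum_congr rfl fun i _ => by ring

lemma convexOn_finset_sup' {ι : Type*} [DecidableEq ι] (s : Finset ι) (hs : s.Nonempty)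
    (f : ι → (V → ℝ) → ℝ) (hf : ∀ i ∈ s, ConvexOn ℝ Set.univ (f i)) :
    ConvexOn ℝ Set.univ (fun x => s.sup' hs fun i => f i x) := by
  revert hf
  induction hs using Finset.Nonempty.cons_induction with
  | singleton a =>
    intro hf
    simpa using hf a (Finset.mem_singleton_self a)
  | cons a s ha hs ih =>
    intro hf
    have h1 := hf a (Finset.mem_cons_self a s)
    have h2 := ih fun i hi => hf i (Finset.mem_cons.mpr (Or.inr hi))
    have h3 := h1.sup h2
    refine (congrArg (ConvexOn ℝ Set.univ) ?_).mpr h3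
    funext x
    rw [Finset.sup'_cons hs]
    rfl

lemma convex_of_submod (F : Finset V → ℝ) (hF : F ∅ = 0)
    (hsub : ∀ A B : Finset V, F (A ∪ B) + F (A ∩ B) ≤ F A + F B) :
    ConvexOn ℝ Set.univ (lovasz F) := by
  set n := Fintype.card V with hndef
  have hne : Nonempty (Fin n ≃ V) := ⟨(Fintype.equivFin V).symm⟩
  have hune : (Finset.univ : Finset (Fin n ≃ V)).Nonempty := Finset.univ_nonempty
  have hrepr : lovasz F
      = fun x => Finset.univ.sup' hune (fun τ : Fin n ≃ V => ∑ i, gw τ F i * x i) := by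
    funext x
    obtain ⟨σ, hσ⟩ := exists_sorted x
    apply le_antisymm
    · calc lovasz F x = ∑ i, gw σ F i * x i := lovasz_sorted' σ F hF x hσ
        _ ≤ _ := Finset.le_sup' (fun τ : Fin n ≃ V => ∑ i, gw τ F i * x i)
            (Finset.mem_univ σ)
    · exact Finset.sup'_le _ _ fun τ _ => gval_le_lovasz τ σ F hF hsub x hσ
  rw [hrepr]
  exact convexOn_finset_sup' Finset.univ hune _ fun τ _ => convexOn_linear (gw τ F)

end final

/-- Lovász' theorem: `F` with `F ∅ = 0` is submodular iff its Lovász extension is convex. -/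
theorem stmt0 {V : Type*} [Fintype V] [Nonempty V] [DecidableEq V]
    (F : Finset V → ℝ) (hF : F ∅ = 0) :
    (∀ A B : Finset V, F (A ∪ B) + F (A ∩ B) ≤ F A + F B) ↔
      ConvexOn ℝ Set.univ (lovasz F) := by
  exact ⟨fun hsub => convex_of_submod F hF hsub, fun hc => submod_of_convex F hF hc⟩
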